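/- arXiv:1508.04173 — 2 statements merged into one kernel-verified Lean document; each statement's English description precedes it below -/
import Mathlib

section
/- For a ring R, if F is a flat left R-module, then the double character module F^{++} = Hom_Z(Hom_Z(F, Q/Z), Q/Z) over a right coherent ring R is again a flat left R-module. -/
open CategoryTheory

noncomputable section

/-- The character module `M⁺ = Hom_ℤ(M, ℚ/ℤ)`. -/
def CharMod (M : Type) [AddCommGroup M] : Type := M →+ AddCircle (1 : ℚ)

namespace CharMod

instance (M : Type) [AddCommGroup M] : AddCommGroup (CharMod M) :=
  inferInstanceAs (AddCommGroup (M →+ AddCircle (1 : ℚ)))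

instance (M : Type) [AddCommGroup M] : FunLike (CharMod M) M (AddCircle (1 : ℚ)) :=
  inferInstanceAs (FunLike (M →+ AddCircle (1 : ℚ)) M _)

instance (M : Type) [AddCommGroup M] :
    AddMonoidHomClass (CharMod M) M (AddCircle (1 : ℚ)) :=
  inferInstanceAs (AddMonoidHomClass (M →+ AddCircle (1 : ℚ)) M _)

@[ext] theorem ext {M : Type} [AddCommGroup M] {c c' : CharMod M}
    (h : ∀ x, c x = c' x) : c = c' := DFunLike.ext _ _ h

/-- If `M` is a left `R`-module, `M⁺` is a right `R`-module. -/
instance moduleRight (R M : Type) [Ring R] [AddCommGroup M] [Module R M] :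
    Module Rᵐᵒᵖ (CharMod M) where
  smul r c := (c : M →+ AddCircle (1 : ℚ)).comp (DistribMulAction.toAddMonoidHom M r.unop)
  one_smul c := by ext x; show c ((1 : R) • x) = c x; rw [one_smul]
  mul_smul r s c := by
    ext x
    show c (((r * s).unop) • x) = c (s.unop • r.unop • x)
    rw [MulOpposite.unop_mul, mul_smul]
  smul_zero r := by ext x; rfl
  smul_add r c d := by ext x; rfl
  add_smul r s c := by
    ext x
    show c (((r + s).unop) • x) = c (r.unop • x) + c (s.unop • x)
    rw [MulOpposite.unop_add, add_smul, map_add]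
  zero_smul c := by
    ext x
    show c ((0 : R) • x) = 0
    rw [zero_smul, map_zero]

/-- If `M` is a right `R`-module, `M⁺` is a left `R`-module. -/
instance moduleLeft (R M : Type) [Ring R] [AddCommGroup M] [Module Rᵐᵒᵖ M] :
    Module R (CharMod M) where
  smul r c := (c : M →+ AddCircle (1 : ℚ)).comp
    (DistribMulAction.toAddMonoidHom M (MulOpposite.op r))
  one_smul c := by ext x; show c ((MulOpposite.op (1 : R)) • x) = c x; simp
  mul_smul r s c := by
    ext x
    show c ((MulOpposite.op (r * s)) • x) = c (MulOpposite.op s • MulOpposite.op r • x)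
    rw [MulOpposite.op_mul, mul_smul]
  smul_zero r := by ext x; rfl
  smul_add r c d := by ext x; rfl
  add_smul r s c := by
    ext x
    show c ((MulOpposite.op (r + s)) • x) = c (MulOpposite.op r • x) + c (MulOpposite.op s • x)
    rw [MulOpposite.op_add, add_smul, map_add]
  zero_smul c := by
    ext x
    show c ((MulOpposite.op (0 : R)) • x) = 0
    rw [MulOpposite.op_zero, zero_smul, map_zero]

end CharMod

/-- The canonical evaluation map `M → M⁺⁺`. -/
def evalCharChar (R M : Type) [Ring R] [AddCommGroup M] [Module R M] :
    M →ₗ[R] CharMod (CharMod M) where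
  toFun m := { toFun := fun c => c m, map_zero' := rfl, map_add' := fun _ _ => rfl }
  map_add' m m' := by ext c; exact map_add c m m'
  map_smul' r m := by ext c; rfl

/-- A ring is right coherent if every finitely generated right ideal is finitely presented. -/
def RightCoherent (R : Type) [Ring R] : Prop :=
  ∀ I : Submodule Rᵐᵒᵖ R, I.FG → Module.FinitePresentation Rᵐᵒᵖ I

/-- Flatness over a possibly noncommutative ring, phrased via Lambek's criterion:
a left module is flat iff its character module is an injective right module. -/
def IsFlatMod (R M : Type) [Ring R] [AddCommGroup M] [Module R M] : Prop :=
  Module.Injective Rᵐᵒᵖ (CharMod M)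

/-- An injective linear map is a pure injection if every map from a finitely presented
module to the cokernel lifts; this is the standard purity criterion. -/
def IsPureInjection {R M N : Type} [Ring R] [AddCommGroup M] [AddCommGroup N]
    [Module R M] [Module R N] (f : M →ₗ[R] N) : Prop :=
  Function.Injective f ∧
  ∀ (P : Type) [AddCommGroup P] [Module R P], Module.FinitePresentation R P →
    ∀ g : P →ₗ[R] (N ⧸ LinearMap.range f),
      ∃ h : P →ₗ[R] N, (LinearMap.range f).mkQ ∘ₗ h = g

/-- A module is pure injective if it is injective relative to pure injections. -/
def IsPureInjectiveModule (R C : Type) [Ring R] [AddCommGroup C] [Module R C] : Prop :=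
  ∀ (A B : Type) [AddCommGroup A] [AddCommGroup B] [Module R A] [Module R B]
    (f : A →ₗ[R] B), IsPureInjection f →
    ∀ g : A →ₗ[R] C, ∃ h : B →ₗ[R] C, h ∘ₗ f = g

/-- An unbounded ℤ-indexed sequence of modules with maps going down. -/
structure Cx (S : Type) [Ring S] where
  X : ℤ → ModuleCat.{0} S
  d : ∀ n : ℤ, X (n + 1) ⟶ X n

namespace Cx

variable {S : Type} [Ring S]

/-- The complex is exact at every spot. -/
def Exact (C : Cx S) : Prop := ∀ n : ℤ, Function.Exact (C.d (n + 1)) (C.d n)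

/-- `Hom(C, P)` is exact. -/
def HomExact (C : Cx S) (P : ModuleCat S) : Prop :=
  ∀ (n : ℤ) (f : C.X (n + 1) ⟶ P), C.d (n + 1) ≫ f = 0 →
    ∃ g : C.X n ⟶ P, C.d n ≫ g = f

/-- `Hom(E, C)` is exact. -/
def CoHomExact (C : Cx S) (E : ModuleCat S) : Prop :=
  ∀ (n : ℤ) (f : E ⟶ C.X (n + 1)), f ≫ C.d n = 0 →
    ∃ g : E ⟶ C.X (n + 1 + 1), g ≫ C.d (n + 1) = f

end Cx

/-- `E ⊗_R C` is exact for every injective right `R`-module `E`, expressed via the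
standard character-module duality: `E ⊗ C` is exact iff `Hom_R(C, E⁺)` is exact. -/
def InjTensorExact (R : Type) [Ring R] (C : Cx R) : Prop :=
  ∀ (E : Type) [AddCommGroup E] [Module Rᵐᵒᵖ E], Module.Injective Rᵐᵒᵖ E →
    C.HomExact (ModuleCat.of R (CharMod E))

/-- A Gorenstein projective module: a cycle of a totally acyclic complex of projectives. -/
def IsGorensteinProjective (R M : Type) [Ring R] [AddCommGroup M] [Module R M] : Prop :=
  ∃ C : Cx R,
    (∀ n, Module.Projective R (C.X n)) ∧ C.Exact ∧
    (∀ P : ModuleCat R, Module.Projective R P → C.HomExact P) ∧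
    Nonempty (M ≃ₗ[R] LinearMap.ker (C.d (-1)).hom)

/-- A Gorenstein flat module: a cycle of an exact `Inj ⊗ -`-exact complex of flats. -/
def IsGorensteinFlat (R M : Type) [Ring R] [AddCommGroup M] [Module R M] : Prop :=
  ∃ C : Cx R,
    (∀ n, IsFlatMod R (C.X n)) ∧ C.Exact ∧ InjTensorExact R C ∧
    Nonempty (M ≃ₗ[R] LinearMap.ker (C.d (-1)).hom)

/-- A Gorenstein injective module: a cycle of an exact `Hom(Inj, -)`-exact complex of
injectives. -/
def IsGorensteinInjective (S N : Type) [Ring S] [AddCommGroup N] [Module S N] : Prop :=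
  ∃ C : Cx S,
    (∀ n, Module.Injective S (C.X n)) ∧ C.Exact ∧
    (∀ E : ModuleCat S, Module.Injective S E → C.CoHomExact E) ∧
    Nonempty (N ≃ₗ[S] LinearMap.ker (C.d (-1)).hom)

/-- Projective dimension at most `n`, via syzygies. -/
def projDimLE (R : Type) [Ring R] : ℕ → ModuleCat R → Prop
  | 0, M => Module.Projective R M
  | n + 1, M => ∃ (K P : ModuleCat R) (i : K ⟶ P) (p : P ⟶ M),
      Module.Projective R P ∧ Function.Injective i ∧ Function.Surjective p ∧
      Function.Exact i p ∧ projDimLE R n K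

/-- Injective dimension at most `n`, via cosyzygies. -/
def injDimLE (R : Type) [Ring R] : ℕ → ModuleCat R → Prop
  | 0, M => Module.Injective R M
  | n + 1, M => ∃ (E C' : ModuleCat R) (i : M ⟶ E) (p : E ⟶ C'),
      Module.Injective R E ∧ Function.Injective i ∧ Function.Surjective p ∧
      Function.Exact i p ∧ injDimLE R n C'

/-- Gorenstein projective dimension at most `n`. -/
def gpdLE (R : Type) [Ring R] : ℕ → ModuleCat R → Prop
  | 0, M => IsGorensteinProjective R M
  | n + 1, M => ∃ (K P : ModuleCat R) (i : K ⟶ P) (p : P ⟶ M),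
      IsGorensteinProjective R P ∧ Function.Injective i ∧ Function.Surjective p ∧
      Function.Exact i p ∧ gpdLE R n K

/-- `R` is left `n`-perfect: every flat left module has projective dimension at most `n`. -/
def LeftNPerfect (R : Type) [Ring R] (n : ℕ) : Prop :=
  ∀ M : ModuleCat R, IsFlatMod R M → projDimLE R n M

/-- `Ext^n(M, N) = 0`. -/
abbrev extVanish (R : Type) [Ring R] (n : ℕ) (M N : ModuleCat R) : Prop :=
  Subsingleton ((((Ext ℤ (ModuleCat R) n).obj (Opposite.op M)).obj N : Type))

/-- A cotorsion module: `Ext^1(K, F) = 0` for every flat `K`. -/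
def IsCotorsion (R F : Type) [Ring R] [AddCommGroup F] [Module R F] : Prop :=
  ∀ (K : ModuleCat R), IsFlatMod R K → extVanish R 1 K (ModuleCat.of R F)

/-- Vanishing of `Ext^1` in an abelian category, via splitting of extensions. -/
def Ext1IsZero {C : Type*} [Category C] [Abelian C] (X Y : C) : Prop :=
  ∀ (E : C) (i : Y ⟶ E) (p : E ⟶ X) (w : i ≫ p = 0),
    (ShortComplex.mk i p w).ShortExact → ∃ s : X ⟶ E, s ≫ p = 𝟙 X


/-! ### Auxiliary development for Statement 0 -/

namespace DCAux

open MulOpposite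

local notation "QZ" => AddCircle (1 : ℚ)

/-- Dual exactness: if `ker g ⊆ range f` and a character kills the image of `f`, it factors
through `g`. -/
lemma dual_exact_middle {U V W : Type} [AddCommGroup U] [AddCommGroup V] [AddCommGroup W]
    (f : U →ₗ[ℤ] V) (g : V →ₗ[ℤ] W) (h : LinearMap.ker g ≤ LinearMap.range f)
    (c : V →ₗ[ℤ] QZ) (hc : ∀ u, c (f u) = 0) :
    ∃ w : W →ₗ[ℤ] QZ, ∀ v, w (g v) = c v := by
  have hle : LinearMap.ker g ≤ LinearMap.ker c := fun v hv => by
    obtain ⟨u, rfl⟩ := h hv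
    exact hc u
  set cbar := (LinearMap.ker g).liftQ c hle with hcbar
  set e := g.quotKerEquivRange with he
  obtain ⟨w, hw⟩ := (Module.Baer.of_divisible QZ).extension_property
    (LinearMap.range g).subtype Subtype.val_injective (cbar ∘ₗ (e.symm : _ →ₗ[ℤ] _))
  refine ⟨w, fun v => ?_⟩
  have h1 : e (Submodule.Quotient.mk v) = ⟨g v, ⟨v, rfl⟩⟩ := by
    ext; simp [he, LinearMap.quotKerEquivRange]
  have h2 : e.symm ⟨g v, ⟨v, rfl⟩⟩ = Submodule.Quotient.mk v := by
    rw [← h1, LinearEquiv.symm_apply_apply]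
  have := LinearMap.congr_fun hw (⟨g v, ⟨v, rfl⟩⟩ : LinearMap.range g)
  simpa [h2, hcbar] using this

section Tmul

variable (R : Type) [Ring R]
variable (A : Type) [AddCommGroup A] [Module Rᵐᵒᵖ A]
variable (X : Type) [AddCommGroup X] [Module R X]

open TensorProduct in
/-- The relations for the balanced tensor product. -/
def trel : Submodule ℤ (TensorProduct ℤ A X) :=
  Submodule.span ℤ {z | ∃ (s : Rᵐᵒᵖ) (a : A) (x : X),
    z = (s • a) ⊗ₜ[ℤ] x - a ⊗ₜ[ℤ] (s.unop • x)}

/-- The balanced tensor product of a right `R`-module and a left `R`-module. -/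
def Tmul : Type := TensorProduct ℤ A X ⧸ trel R A X

instance : AddCommGroup (Tmul R A X) := inferInstanceAs (AddCommGroup (_ ⧸ _))

variable {A X}

open TensorProduct in
/-- The canonical generator `a ⊗ x` of `Tmul`. -/
def tmk (a : A) (x : X) : Tmul R A X := Submodule.Quotient.mk (a ⊗ₜ[ℤ] x)

lemma tmk_add_left (a a' : A) (x : X) :
    tmk R (a + a') x = tmk R a x + tmk R a' x := by
  unfold tmk; rw [TensorProduct.add_tmul, Submodule.Quotient.mk_add]; rfl

lemma tmk_add_right (a : A) (x x' : X) :
    tmk R a (x + x') = tmk R a x + tmk R a x' := by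
  unfold tmk; rw [TensorProduct.tmul_add, Submodule.Quotient.mk_add]; rfl

lemma tmk_zero_left (x : X) : tmk R (0 : A) x = 0 := by
  unfold tmk; rw [TensorProduct.zero_tmul]; exact Submodule.Quotient.mk_zero _

lemma tmk_zero_right (a : A) : tmk R a (0 : X) = 0 := by
  unfold tmk; rw [TensorProduct.tmul_zero]; exact Submodule.Quotient.mk_zero _

lemma tmk_rel (s : Rᵐᵒᵖ) (a : A) (x : X) :
    tmk R (s • a) x = tmk R a (s.unop • x) :=
  (Submodule.Quotient.eq _).mpr (Submodule.subset_span ⟨s, a, x, rfl⟩)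

lemma Tmul.induction_on {p : Tmul R A X → Prop} (t : Tmul R A X)
    (h0 : p 0) (hmk : ∀ a x, p (tmk R a x)) (hadd : ∀ u v, p u → p v → p (u + v)) : p t := by
  obtain ⟨z, rfl⟩ := Submodule.Quotient.mk_surjective _ t
  induction z using TensorProduct.induction_on with
  | zero => exact h0
  | tmul a x => exact hmk a x
  | add u v hu hv => rw [Submodule.Quotient.mk_add]; exact hadd _ _ hu hv

/-- Lifting a balanced biadditive map to `Tmul`. -/
def liftT {Q : Type} [AddCommGroup Q] (b : A →+ X →+ Q)
    (hb : ∀ (s : Rᵐᵒᵖ) (a : A) (x : X), b (s • a) x = b a (s.unop • x)) :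
    Tmul R A X →ₗ[ℤ] Q := by
  refine Submodule.liftQ _ (TensorProduct.lift (LinearMap.mk₂ ℤ (fun a x => b a x)
    (fun a a' x => by show b (a + a') x = b a x + b a' x; rw [map_add, AddMonoidHom.add_apply])
    (fun z a x => by show b (z • a) x = z • b a x; rw [map_zsmul, AddMonoidHom.smul_apply])
    (fun a x x' => by show b a (x + x') = b a x + b a x'; rw [map_add])
    (fun z a x => by show b a (z • x) = z • b a x; rw [map_zsmul]))) ?_
  refine Submodule.span_le.mpr ?_
  rintro _ ⟨s, a, x, rfl⟩
  refine LinearMap.mem_ker.mpr ?_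
  exact (map_sub (TensorProduct.lift _) _ _).trans (by
    rw [TensorProduct.lift.tmul, TensorProduct.lift.tmul]; exact sub_eq_zero.mpr (hb s a x))

@[simp] lemma liftT_tmk {Q : Type} [AddCommGroup Q] (b : A →+ X →+ Q)
    (hb : ∀ (s : Rᵐᵒᵖ) (a : A) (x : X), b (s • a) x = b a (s.unop • x)) (a : A) (x : X) :
    liftT R b hb (tmk R a x) = b a x := rfl

/-- The generator map as a biadditive map. -/
def tmkHom : A →+ X →+ Tmul R A X :=
  AddMonoidHom.mk' (fun a => AddMonoidHom.mk' (fun x => tmk R a x) (tmk_add_right R a))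
    (fun a a' => by ext x; exact tmk_add_left R a a' x)

variable {B : Type} [AddCommGroup B] [Module Rᵐᵒᵖ B]

/-- Functoriality of `Tmul` in the first variable. -/
def Tmap (f : A →ₗ[Rᵐᵒᵖ] B) : Tmul R A X →ₗ[ℤ] Tmul R B X :=
  liftT R ((tmkHom R).comp f.toAddMonoidHom)
    (fun s a x => by
      simp only [AddMonoidHom.coe_comp, Function.comp_apply, LinearMap.toAddMonoidHom_coe,
        map_smul]
      show tmk R (s • f a) x = tmk R (f a) (s.unop • x)
      exact tmk_rel R s (f a) x)

@[simp] lemma Tmap_tmk (f : A →ₗ[Rᵐᵒᵖ] B) (a : A) (x : X) :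
    Tmap R (X := X) f (tmk R a x) = tmk R (f a) x := rfl

lemma Tmap_Tmap {C : Type} [AddCommGroup C] [Module Rᵐᵒᵖ C]
    (g : A →ₗ[Rᵐᵒᵖ] B) (f : B →ₗ[Rᵐᵒᵖ] C) (t : Tmul R A X) :
    Tmap R (X := X) f (Tmap R (X := X) g t) = Tmap R (X := X) (f ∘ₗ g) t := by
  induction t using Tmul.induction_on with
  | h0 => simp
  | hmk a x => simp
  | hadd u v hu hv => simp [map_add, hu, hv]

lemma Tmap_zero (t : Tmul R A X) : Tmap R (X := X) (0 : A →ₗ[Rᵐᵒᵖ] B) t = 0 := by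
  induction t using Tmul.induction_on with
  | h0 => simp
  | hmk a x => simp [tmk_zero_left]
  | hadd u v hu hv => simp [map_add, hu, hv]

lemma Tmap_surjective (f : A →ₗ[Rᵐᵒᵖ] B) (hf : Function.Surjective f) :
    Function.Surjective (Tmap R (X := X) f) := by
  intro t
  induction t using Tmul.induction_on with
  | h0 => exact ⟨0, map_zero _⟩
  | hmk b x => obtain ⟨a, rfl⟩ := hf b; exact ⟨tmk R a x, rfl⟩
  | hadd u v hu hv =>
      obtain ⟨u', rfl⟩ := hu; obtain ⟨v', rfl⟩ := hv
      exact ⟨u' + v', map_add _ _ _⟩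

end Tmul

section Nu

variable (R : Type) [Ring R]
variable (E : Type) [AddCommGroup E] [Module Rᵐᵒᵖ E]
variable (A : Type) [AddCommGroup A] [Module Rᵐᵒᵖ A]

/-- The natural map `A ⊗ E⁺ → Hom(A, E)⁺`. -/
def nu : Tmul R A (CharMod E) →ₗ[ℤ] CharMod (A →ₗ[Rᵐᵒᵖ] E) := by
  refine liftT R
    (AddMonoidHom.mk' (fun a => AddMonoidHom.mk'
      (fun c => AddMonoidHom.mk' (fun φ : A →ₗ[Rᵐᵒᵖ] E => c (φ a))
        (fun φ ψ => by show c ((φ + ψ) a) = c (φ a) + c (ψ a); rw [LinearMap.add_apply, map_add]))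
      (fun c c' => by ext φ; rfl))
      (fun a a' => by ext c φ; show c (φ (a + a')) = c (φ a) + c (φ a'); rw [map_add, map_add]))
    (fun s a c => ?_)
  ext φ
  show c (φ (s • a)) = (s.unop • c) (φ a)
  show c (φ (s • a)) = c (op s.unop • φ a)
  rw [map_smul, op_unop]

@[simp] lemma nu_tmk (a : A) (c : CharMod E) (φ : A →ₗ[Rᵐᵒᵖ] E) :
    nu R E A (tmk R a c) φ = c (φ a) := rfl

variable {A} {B : Type} [AddCommGroup B] [Module Rᵐᵒᵖ B]

lemma nu_natural (f : A →ₗ[Rᵐᵒᵖ] B) (t : Tmul R A (CharMod E)) (φ : B →ₗ[Rᵐᵒᵖ] E) :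
    nu R E B (Tmap R f t) φ = nu R E A t (φ ∘ₗ f) := by
  induction t using Tmul.induction_on with
  | h0 => rw [map_zero, map_zero]; rfl
  | hmk a c => rfl
  | hadd u v hu hv =>
      rw [map_add, map_add, map_add]; exact congrArg₂ (· + ·) hu hv

end Nu

section Free

variable (R : Type) [Ring R]
variable (E : Type) [AddCommGroup E] [Module Rᵐᵒᵖ E]
variable (ι : Type) [Fintype ι] [DecidableEq ι]

/-- The evaluation-at-`i`-then-scale linear map. -/
def phi (i : ι) (e : E) : (ι → Rᵐᵒᵖ) →ₗ[Rᵐᵒᵖ] E where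
  toFun a := a i • e
  map_add' a a' := by simp [add_smul]
  map_smul' s a := by simp [Pi.smul_apply, mul_smul, smul_eq_mul]

@[simp] lemma phi_apply (i : ι) (e : E) (a : ι → Rᵐᵒᵖ) : phi R E ι i e a = a i • e := rfl

lemma phi_add (i : ι) (e e' : E) : phi R E ι i (e + e') = phi R E ι i e + phi R E ι i e' := by
  ext a; simp [smul_add]

lemma smul_single_one (i : ι) (s : Rᵐᵒᵖ) :
    s • Pi.single i (1 : Rᵐᵒᵖ) = (Pi.single i s : ι → Rᵐᵒᵖ) := by
  funext j
  simp only [Pi.smul_apply, smul_eq_mul, Pi.single_apply]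
  split <;> simp

variable {X : Type} [AddCommGroup X] [Module R X]

lemma exists_normal_form (t : Tmul R (ι → Rᵐᵒᵖ) X) :
    ∃ x : ι → X, t = ∑ i, tmk R (Pi.single i (1 : Rᵐᵒᵖ)) (x i) := by
  induction t using Tmul.induction_on with
  | h0 => exact ⟨0, by simp [tmk_zero_right]⟩
  | hmk a c =>
      refine ⟨fun i => (a i).unop • c, ?_⟩
      have h1 : ∀ i, tmk R (Pi.single i (1 : Rᵐᵒᵖ)) ((a i).unop • c)
          = tmk R (Pi.single i (a i) : ι → Rᵐᵒᵖ) c := by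
        intro i
        rw [← tmk_rel, smul_single_one]
      rw [Finset.sum_congr rfl (fun i _ => h1 i)]
      have h2 : ∀ (s : Finset ι),
          tmk R ((∑ i ∈ s, Pi.single i (a i) : ι → Rᵐᵒᵖ)) c
            = ∑ i ∈ s, tmk R (Pi.single i (a i) : ι → Rᵐᵒᵖ) c := by
        intro s
        classical
        induction s using Finset.induction_on with
        | empty => simp [tmk_zero_left]
        | insert _ _ hnotmem ih => rw [Finset.sum_insert hnotmem, Finset.sum_insert hnotmem,
            tmk_add_left, ih]
      rw [← h2 Finset.univ]
      congr 1
      exact (Finset.univ_sum_single a).symm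
  | hadd u v hu hv =>
      obtain ⟨x, rfl⟩ := hu; obtain ⟨y, rfl⟩ := hv
      refine ⟨x + y, ?_⟩
      rw [← Finset.sum_add_distrib]
      exact Finset.sum_congr rfl fun i _ => by rw [Pi.add_apply, tmk_add_right]

lemma sum_phi (φ : (ι → Rᵐᵒᵖ) →ₗ[Rᵐᵒᵖ] E) :
    ∑ i, phi R E ι i (φ (Pi.single i (1 : Rᵐᵒᵖ))) = φ := by
  apply LinearMap.ext; intro a
  rw [LinearMap.sum_apply]
  simp only [phi_apply]
  have : ∀ i, a i • φ (Pi.single i (1 : Rᵐᵒᵖ)) = φ (Pi.single i (a i)) := by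
    intro i; rw [← map_smul, smul_single_one]
  rw [Finset.sum_congr rfl (fun i _ => this i), ← map_sum]
  congr 1
  exact Finset.univ_sum_single a

lemma nu_free_injective : Function.Injective (nu R E (ι → Rᵐᵒᵖ)) := by
  rw [injective_iff_map_eq_zero]
  intro t ht
  obtain ⟨x, rfl⟩ := exists_normal_form R ι t
  have hx : ∀ i, x i = 0 := by
    intro i
    ext e
    have h0 : nu R E (ι → Rᵐᵒᵖ) (∑ j, tmk R (Pi.single j (1 : Rᵐᵒᵖ)) (x j)) (phi R E ι i e)
        = 0 := by rw [ht]; rfl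
    rw [map_sum] at h0
    have h1 : ∀ j, (nu R E (ι → Rᵐᵒᵖ) (tmk R (Pi.single j (1 : Rᵐᵒᵖ)) (x j))) (phi R E ι i e)
        = x j (((Pi.single j (1 : Rᵐᵒᵖ) : ι → Rᵐᵒᵖ) i) • e) := fun j => rfl
    have h2 : (∑ j, nu R E (ι → Rᵐᵒᵖ) (tmk R (Pi.single j (1 : Rᵐᵒᵖ)) (x j))) (phi R E ι i e)
        = ∑ j, x j (((Pi.single j (1 : Rᵐᵒᵖ) : ι → Rᵐᵒᵖ) i) • e) := by
      exact (AddMonoidHom.finset_sum_apply _ _ _).trans (Finset.sum_congr rfl fun j _ => h1 j)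
    rw [h2] at h0
    rw [Finset.sum_eq_single i] at h0
    · rw [Pi.single_eq_same, one_smul] at h0
      rw [h0]; rfl
    · intro j _ hji
      rw [Pi.single_eq_of_ne (Ne.symm hji), zero_smul, map_zero]
    · intro h; exact absurd (Finset.mem_univ i) h
  rw [Finset.sum_congr rfl (fun i _ => by rw [hx i])]
  simp [tmk_zero_right]

lemma nu_free_surjective : Function.Surjective (nu R E (ι → Rᵐᵒᵖ)) := by
  intro χ
  refine ⟨∑ i, tmk R (Pi.single i (1 : Rᵐᵒᵖ))
    (AddMonoidHom.mk' (fun e => χ (phi R E ι i e))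
      (fun e e' => by show χ (phi R E ι i (e + e')) = _; rw [phi_add, map_add]) : CharMod E), ?_⟩
  ext φ
  rw [map_sum]; refine (AddMonoidHom.finset_sum_apply _ _ _).trans ?_
  have h1 : ∀ i, (nu R E (ι → Rᵐᵒᵖ) (tmk R (Pi.single i (1 : Rᵐᵒᵖ))
      (AddMonoidHom.mk' (fun e => χ (phi R E ι i e))
        (fun e e' => by show χ (phi R E ι i (e + e')) = _; rw [phi_add, map_add]) : CharMod E))) φ
      = χ (phi R E ι i (φ (Pi.single i (1 : Rᵐᵒᵖ)))) := fun i => rfl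
  refine (Finset.sum_congr rfl (fun i _ => h1 i)).trans ?_
  rw [← map_sum]
  congr 1
  exact sum_phi R E ι φ

end Free

section FP

variable (R : Type) [Ring R]
variable (E : Type) [AddCommGroup E] [Module Rᵐᵒᵖ E]

lemma nu_injective_of_fp (P : Type) [AddCommGroup P] [Module Rᵐᵒᵖ P]
    (hP : Module.FinitePresentation Rᵐᵒᵖ P) :
    Function.Injective (nu R E P) := by
  classical
  haveI := hP
  obtain ⟨n, v, hv⟩ := Module.Finite.exists_fin (R := Rᵐᵒᵖ) (M := P)
  set π : (Fin n → Rᵐᵒᵖ) →ₗ[Rᵐᵒᵖ] P := Fintype.linearCombination Rᵐᵒᵖ v with hπdef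
  have hπ : Function.Surjective π := by
    rw [← LinearMap.range_eq_top, hπdef, Fintype.range_linearCombination, hv]
  have hker : (LinearMap.ker π).FG := Module.FinitePresentation.fg_ker π hπ
  obtain ⟨T, hT⟩ := hker
  set d : (↥T → Rᵐᵒᵖ) →ₗ[Rᵐᵒᵖ] (Fin n → Rᵐᵒᵖ) :=
    Fintype.linearCombination Rᵐᵒᵖ (fun t : ↥T => (t : Fin n → Rᵐᵒᵖ)) with hddef
  have hd : LinearMap.range d = LinearMap.ker π := by
    rw [hddef, Fintype.range_linearCombination, Subtype.range_coe_subtype,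
      Finset.setOf_mem, hT]
  rw [injective_iff_map_eq_zero]
  intro t ht
  obtain ⟨u, rfl⟩ := Tmap_surjective R π hπ t
  have h1 : ∀ ψ : P →ₗ[Rᵐᵒᵖ] E, nu R E (Fin n → Rᵐᵒᵖ) u (ψ ∘ₗ π) = 0 := by
    intro ψ
    rw [← nu_natural, ht]; rfl
  -- set up the dual exactness argument
  set fℤ : (P →ₗ[Rᵐᵒᵖ] E) →ₗ[ℤ] ((Fin n → Rᵐᵒᵖ) →ₗ[Rᵐᵒᵖ] E) :=
    (AddMonoidHom.mk' (fun ψ : P →ₗ[Rᵐᵒᵖ] E => ψ ∘ₗ π)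
      (fun ψ ψ' => LinearMap.add_comp _ _ _)).toIntLinearMap with hfdef
  set gℤ : ((Fin n → Rᵐᵒᵖ) →ₗ[Rᵐᵒᵖ] E) →ₗ[ℤ] ((↥T → Rᵐᵒᵖ) →ₗ[Rᵐᵒᵖ] E) :=
    (AddMonoidHom.mk' (fun φ : (Fin n → Rᵐᵒᵖ) →ₗ[Rᵐᵒᵖ] E => φ ∘ₗ d)
      (fun φ φ' => LinearMap.add_comp _ _ _)).toIntLinearMap with hgdef
  have hexact : LinearMap.ker gℤ ≤ LinearMap.range fℤ := by
    intro φ hφ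
    have hφ0 : φ ∘ₗ d = 0 := hφ
    have hle : LinearMap.ker π ≤ LinearMap.ker φ := by
      rw [← hd]
      rintro _ ⟨w, rfl⟩
      exact LinearMap.congr_fun hφ0 w
    set φbar := (LinearMap.ker π).liftQ φ hle with hφbar
    set eπ := π.quotKerEquivRange with heπ
    have hrt : LinearMap.range π = ⊤ := LinearMap.range_eq_top.mpr hπ
    set ρ : P →ₗ[Rᵐᵒᵖ] LinearMap.range π :=
      LinearMap.codRestrict _ LinearMap.id (fun x => by rw [hrt]; trivial) with hρ
    refine ⟨φbar ∘ₗ (eπ.symm : _ →ₗ[Rᵐᵒᵖ] _) ∘ₗ ρ, ?_⟩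
    show (φbar ∘ₗ (eπ.symm : _ →ₗ[Rᵐᵒᵖ] _) ∘ₗ ρ) ∘ₗ π = φ
    apply LinearMap.ext; intro a
    have h3 : eπ (Submodule.Quotient.mk a) = ρ (π a) := by
      ext; simp [heπ, hρ, LinearMap.quotKerEquivRange]
    have h4 : eπ.symm (ρ (π a)) = Submodule.Quotient.mk a := by
      rw [← h3, LinearEquiv.symm_apply_apply]
    simp only [LinearMap.comp_apply, LinearEquiv.coe_coe, h4, hφbar, Submodule.liftQ_apply]
  set c : ((Fin n → Rᵐᵒᵖ) →ₗ[Rᵐᵒᵖ] E) →ₗ[ℤ] QZ :=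
    AddMonoidHom.toIntLinearMap (nu R E (Fin n → Rᵐᵒᵖ) u) with hcdef
  have hcf : ∀ ψ : P →ₗ[Rᵐᵒᵖ] E, c (fℤ ψ) = 0 := fun ψ => h1 ψ
  obtain ⟨w, hw⟩ := dual_exact_middle fℤ gℤ hexact c hcf
  obtain ⟨v', hv'⟩ := nu_free_surjective R E ↥T (w.toAddMonoidHom : CharMod _)
  have hu : Tmap R (X := CharMod E) d v' = u := by
    apply nu_free_injective R E (Fin n)
    ext φ
    rw [nu_natural, hv']
    exact hw φ
  rw [← hu, Tmap_Tmap]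
  have hπd : π ∘ₗ d = 0 := by
    apply LinearMap.ext; intro w'
    simp only [LinearMap.comp_apply, LinearMap.zero_apply]
    have : d w' ∈ LinearMap.ker π := hd ▸ LinearMap.mem_range_self d w'
    exact this
  rw [hπd]
  exact Tmap_zero R v'

end FP

section Corr

variable (R : Type) [Ring R]
variable {A : Type} [AddCommGroup A] [Module Rᵐᵒᵖ A]
variable {X : Type} [AddCommGroup X] [Module R X]

/-- From a linear map into a character module to a character of the balanced tensor. -/
def homToChar (f : A →ₗ[Rᵐᵒᵖ] CharMod X) : Tmul R A X →ₗ[ℤ] QZ :=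
  liftT R
    (AddMonoidHom.mk' (fun a => AddMonoidHom.mk' (fun x => f a x) (fun x y => map_add (f a) x y))
      (fun a a' => by ext x; show f (a + a') x = f a x + f a' x; rw [map_add]; rfl))
    (fun s a x => by
      show f (s • a) x = f a (s.unop • x)
      rw [map_smul]
      rfl)

@[simp] lemma homToChar_tmk (f : A →ₗ[Rᵐᵒᵖ] CharMod X) (a : A) (x : X) :
    homToChar R f (tmk R a x) = f a x := rfl

/-- From a character of the balanced tensor to a linear map into the character module. -/
def charToHom (χ : Tmul R A X →ₗ[ℤ] QZ) : A →ₗ[Rᵐᵒᵖ] CharMod X where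
  toFun a := AddMonoidHom.mk' (fun x => χ (tmk R a x))
    (fun x y => by show χ (tmk R a (x + y)) = _; rw [tmk_add_right, map_add])
  map_add' a a' := by
    ext x
    show χ (tmk R (a + a') x) = χ (tmk R a x) + χ (tmk R a' x)
    rw [tmk_add_left, map_add]
  map_smul' s a := by
    ext x
    show χ (tmk R (s • a) x) = χ (tmk R a (s.unop • x))
    rw [tmk_rel]

@[simp] lemma charToHom_apply (χ : Tmul R A X →ₗ[ℤ] QZ) (a : A) (x : X) :
    charToHom R χ a x = χ (tmk R a x) := rfl

end Corr

section Coherent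

variable (R : Type) [Ring R]

/-- The opposite ring as a module over itself is isomorphic to `R` with the opposite action. -/
def opEquiv : Rᵐᵒᵖ ≃ₗ[Rᵐᵒᵖ] R where
  toFun := unop
  invFun := op
  map_add' _ _ := rfl
  map_smul' _ _ := rfl
  left_inv _ := rfl
  right_inv _ := rfl

lemma fp_of_fg (hcoh : RightCoherent R) (I : Ideal Rᵐᵒᵖ) (hfg : I.FG) :
    Module.FinitePresentation Rᵐᵒᵖ I := by
  set e := opEquiv R with he
  set I' : Submodule Rᵐᵒᵖ R := Submodule.map (e : Rᵐᵒᵖ →ₗ[Rᵐᵒᵖ] R) I with hI'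
  have hI'fg : I'.FG := Submodule.FG.map _ hfg
  haveI : Module.FinitePresentation Rᵐᵒᵖ I' := hcoh I' hI'fg
  set eI : I ≃ₗ[Rᵐᵒᵖ] I' := Submodule.equivMapOfInjective (e : Rᵐᵒᵖ →ₗ[Rᵐᵒᵖ] R) e.injective I
  exact Module.finitePresentation_of_surjective (eI.symm : I' →ₗ[Rᵐᵒᵖ] I)
    eI.symm.surjective (by rw [LinearEquiv.ker]; exact Submodule.fg_bot)

end Coherent

end DCAux

/-- over a right coherent ring, the double character module of a flat
left module is again flat. -/
theorem flat_double_character (R : Type) [Ring R] (hcoh : RightCoherent R)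
    (F : Type) [AddCommGroup F] [Module R F] (hF : IsFlatMod R F) :
    IsFlatMod R (CharMod (CharMod F)) := by
  classical
  show Module.Injective Rᵐᵒᵖ (CharMod (CharMod (CharMod F)))
  open DCAux in
  -- notation: E = F⁺ (a right module), X = E⁺ = F⁺⁺ (a left module)
  apply Module.Baer.injective
  intro J f
  -- key injectivity: for every right ideal, the balanced tensor embeds
  have key_fg : ∀ (I : Ideal Rᵐᵒᵖ), I.FG →
      Function.Injective (Tmap R (X := CharMod (CharMod F)) I.subtype) := by
    intro I hIfg
    have hfp := fp_of_fg R hcoh I hIfg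
    rw [injective_iff_map_eq_zero]
    intro t ht
    apply nu_injective_of_fp R (CharMod F) I hfp
    have hzero : ∀ ψ : ↥I →ₗ[Rᵐᵒᵖ] CharMod F, nu R (CharMod F) ↥I t ψ = 0 := by
      intro ψ
      obtain ⟨φ, hφ⟩ := hF.out I.subtype Subtype.val_injective ψ
      have hcomp : ψ = φ ∘ₗ I.subtype := LinearMap.ext fun a => (hφ a).symm
      rw [hcomp, ← nu_natural, ht]
      rfl
    ext ψ
    exact hzero ψ
  have hι : Function.Injective (Tmap R (X := CharMod (CharMod F)) J.subtype) := by
    rw [injective_iff_map_eq_zero]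
    intro t ht
    -- reduce to a finitely generated subideal
    have hdecomp : ∃ (J₀ : Ideal Rᵐᵒᵖ) (hle : J₀ ≤ J) (_ : J₀.FG)
        (t₀ : Tmul R ↥J₀ (CharMod (CharMod F))),
        Tmap R (X := CharMod (CharMod F)) (Submodule.inclusion hle) t₀ = t := by
      clear ht
      induction t using Tmul.induction_on with
      | h0 => exact ⟨⊥, bot_le, Submodule.fg_bot, 0, map_zero _⟩
      | hmk a x =>
          refine ⟨Submodule.span Rᵐᵒᵖ {(a : Rᵐᵒᵖ)},
            Submodule.span_le.mpr (by simpa using a.2), Submodule.fg_span_singleton _,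
            tmk R ⟨(a : Rᵐᵒᵖ), Submodule.mem_span_singleton_self _⟩ x, ?_⟩
          rw [Tmap_tmk]
          rfl
      | hadd u v hu hv =>
          obtain ⟨Ju, hleu, hfgu, tu, rfl⟩ := hu
          obtain ⟨Jv, hlev, hfgv, tv, rfl⟩ := hv
          refine ⟨Ju ⊔ Jv, sup_le hleu hlev, Submodule.FG.sup hfgu hfgv,
            Tmap R (Submodule.inclusion (le_sup_left : Ju ≤ Ju ⊔ Jv)) tu
              + Tmap R (Submodule.inclusion (le_sup_right : Jv ≤ Ju ⊔ Jv)) tv, ?_⟩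
          rw [map_add, Tmap_Tmap, Tmap_Tmap]
          congr 2 <;> exact LinearMap.ext fun _ => rfl
    obtain ⟨J₀, hle, hfg, t₀, rfl⟩ := hdecomp
    have hcompose : Tmap R (X := CharMod (CharMod F)) J.subtype
        (Tmap R (Submodule.inclusion hle) t₀)
        = Tmap R (X := CharMod (CharMod F)) J₀.subtype t₀ := by
      rw [Tmap_Tmap]
      congr 1
    rw [hcompose] at ht
    have ht0 : t₀ = 0 :=
      (injective_iff_map_eq_zero (Tmap R (X := CharMod (CharMod F)) J₀.subtype)).mp
        (key_fg J₀ hfg) t₀ ht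
    rw [ht0, map_zero]
  -- extend the corresponding character along the injection
  set χ := homToChar R f with hχ
  obtain ⟨χhat, hχhat⟩ := (Module.Baer.of_divisible (AddCircle (1 : ℚ))).extension_property
    (Tmap R (X := CharMod (CharMod F)) J.subtype) hι χ
  refine ⟨charToHom R χhat, fun x mem => ?_⟩
  ext y
  have h1 : tmk R x y = Tmap R (X := CharMod (CharMod F)) J.subtype
      (tmk R (⟨x, mem⟩ : ↥J) y) := rfl
  rw [charToHom_apply, h1]
  have h2 := LinearMap.congr_fun hχhat (tmk R (⟨x, mem⟩ : ↥J) y)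
  simp only [LinearMap.comp_apply] at h2
  rw [h2, hχ, homToChar_tmk]

end
end

section
/- Let R be a right coherent ring that is left n-perfect. Then every Gorenstein projective left R-module is Gorenstein flat. -/
open CategoryTheory

noncomputable section

/-! ### Auxiliary development -/

namespace GorensteinAux

open MulOpposite Finset

variable {R : Type} [Ring R]

/-- Evaluation at a point as an additive hom on the character module. -/
def evalCM {M : Type} [AddCommGroup M] (m : M) : CharMod M →+ AddCircle (1 : ℚ) where
  toFun c := c m
  map_zero' := rfl
  map_add' _ _ := rfl

@[simp] lemma evalCM_apply {M : Type} [AddCommGroup M] (m : M) (c : CharMod M) :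
    evalCM m c = c m := rfl

lemma smul_right_apply {M : Type} [AddCommGroup M] [Module R M] (r : Rᵐᵒᵖ) (c : CharMod M)
    (m : M) : (r • c) m = c (r.unop • m) := rfl

lemma smul_left_apply {E : Type} [AddCommGroup E] [Module Rᵐᵒᵖ E] (r : R) (c : CharMod E)
    (e : E) : (r • c) e = c (op r • e) := rfl

/-- Factor an additive map to `ℚ/ℤ` through another additive map whose kernel it kills. -/
lemma addHom_factor {G H : Type} [AddCommGroup G] [AddCommGroup H] (A : G →+ H)
    (μ : G →+ AddCircle (1 : ℚ)) (hker : ∀ g, A g = 0 → μ g = 0) :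
    ∃ W : H →+ AddCircle (1 : ℚ), ∀ g, W (A g) = μ g := by
  have key : ∀ g g', A g = A g' → μ g = μ g' := by
    intro g g' h
    have h0 : μ (g - g') = 0 := hker _ (by rw [map_sub, h, sub_self])
    rw [map_sub, sub_eq_zero] at h0
    exact h0
  set T := A.range with hT
  have mem : ∀ y : T, ∃ g, A g = (y : H) := fun y => y.2
  let μ' : T →+ AddCircle (1 : ℚ) := AddMonoidHom.mk'
    (fun y => μ (mem y).choose)
    (by
      intro y z
      show μ (mem (y + z)).choose = μ (mem y).choose + μ (mem z).choose
      rw [← map_add]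
      refine key _ _ ?_
      rw [(mem (y + z)).choose_spec, map_add, (mem y).choose_spec, (mem z).choose_spec]
      rfl)
  obtain ⟨W, hW⟩ := (Module.Baer.of_divisible (AddCircle (1 : ℚ))).extension_property_addMonoidHom
    T.subtype Subtype.val_injective μ'
  refine ⟨W, fun g => ?_⟩
  have h1 : W (A g) = μ' ⟨A g, ⟨g, rfl⟩⟩ := DFunLike.congr_fun hW (⟨A g, ⟨g, rfl⟩⟩ : T)
  rw [h1]
  exact key _ _ ((mem ⟨A g, ⟨g, rfl⟩⟩).choose_spec)

/-- Equational criterion for flatness: every relation comes from relations in the ring. -/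
def FlatRel (R M : Type) [Ring R] [AddCommGroup M] [Module R M] : Prop :=
  ∀ (k : ℕ) (x : Fin k → R) (m : Fin k → M), (∑ j, x j • m j) = 0 →
    ∃ (s : ℕ) (v : Fin s → Fin k → R) (w : Fin s → M),
      (∀ t, ∑ j, x j * v t j = 0) ∧ ∀ j, m j = ∑ t, v t j • w t

lemma star {M : Type} [AddCommGroup M] [Module R M] (hM : FlatRel R M)
    (I : Ideal Rᵐᵒᵖ) (g : I →ₗ[Rᵐᵒᵖ] CharMod M) {k : ℕ} (ξ : Fin k → I) (m : Fin k → M)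
    (hrel : ∑ j, ((ξ j : Rᵐᵒᵖ).unop) • m j = 0) : ∑ j, g (ξ j) (m j) = 0 := by
  obtain ⟨s, v, w, hv, hw⟩ := hM k (fun j => (ξ j : Rᵐᵒᵖ).unop) m hrel
  have step1 : ∀ j, g (ξ j) (m j) = ∑ t, g (op (v t j) • ξ j) (w t) := by
    intro j
    rw [hw j, map_sum (g (ξ j))]
    refine Finset.sum_congr rfl fun t _ => ?_
    have hgs : g (op (v t j) • ξ j) = op (v t j) • g (ξ j) := g.map_smul _ _
    rw [hgs]
    rfl
  have hz : ∀ t, (∑ j, (op (v t j) : Rᵐᵒᵖ) • ξ j) = (0 : I) := by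
    intro t
    have hval : ((∑ j, (op (v t j) : Rᵐᵒᵖ) • ξ j : I) : Rᵐᵒᵖ)
        = op (∑ j, (ξ j : Rᵐᵒᵖ).unop * v t j) := by
      push_cast
      rw [Finset.op_sum]
      refine Finset.sum_congr rfl fun j _ => ?_
      rw [op_mul, op_unop]
      rfl
    apply Subtype.ext
    rw [hval, hv t, op_zero]
    simp
  calc ∑ j, g (ξ j) (m j)
      = ∑ j, ∑ t, g (op (v t j) • ξ j) (w t) := Finset.sum_congr rfl fun j _ => step1 j
    _ = ∑ t, ∑ j, g (op (v t j) • ξ j) (w t) := Finset.sum_comm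
    _ = ∑ t, evalCM (w t) (∑ j, g (op (v t j) • ξ j)) := by
        refine Finset.sum_congr rfl fun t _ => ?_
        rw [map_sum (evalCM (w t))]
        rfl
    _ = ∑ t, evalCM (w t) (g (∑ j, op (v t j) • ξ j)) := by
        refine Finset.sum_congr rfl fun t _ => ?_
        rw [map_sum g]
    _ = 0 := by
        refine Finset.sum_eq_zero fun t _ => ?_
        rw [hz t, map_zero]
        rfl

/-- The equational criterion implies that the character module is injective. -/
lemma flatRel_isFlatMod {M : Type} [AddCommGroup M] [Module R M] (hM : FlatRel R M) :
    IsFlatMod R M := by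
  refine Module.Baer.injective ?_
  intro I g
  classical
  let A : ((I × M) →₀ ℤ) →+ M := Finsupp.liftAddHom fun z =>
    AddMonoidHom.mk' (fun n => n • ((z.1 : Rᵐᵒᵖ).unop • z.2)) (fun a b => add_zsmul _ a b)
  let q : ((I × M) →₀ ℤ) →+ AddCircle (1 : ℚ) := Finsupp.liftAddHom fun z =>
    AddMonoidHom.mk' (fun n => n • (g z.1 z.2)) (fun a b => add_zsmul _ a b)
  have hker : ∀ d, A d = 0 → q d = 0 := by
    intro d hd
    set k := Fintype.card d.support with hk
    let σ : Fin k ≃ d.support := (Fintype.equivFin _).symm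
    have hrel : ∑ j, (((σ j).1.1 : Rᵐᵒᵖ).unop) • (d (σ j).1 • (σ j).1.2) = 0 := by
      have h1 : ∀ j : Fin k, (((σ j).1.1 : Rᵐᵒᵖ).unop) • (d (σ j).1 • (σ j).1.2)
          = d (σ j).1 • (((σ j).1.1 : Rᵐᵒᵖ).unop • (σ j).1.2) :=
        fun j => smul_comm _ _ _
      rw [Finset.sum_congr rfl fun j _ => h1 j]
      have h2 : ∑ j, d (σ j).1 • (((σ j).1.1 : Rᵐᵒᵖ).unop • (σ j).1.2)
          = ∑ z : d.support, d z.1 • (((z.1.1 : Rᵐᵒᵖ).unop) • z.1.2) :=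
        Fintype.sum_equiv σ _ _ (fun j => rfl)
      rw [h2, Finset.sum_coe_sort d.support
        (fun z => d z • (((z.1 : Rᵐᵒᵖ).unop) • z.2))]
      calc ∑ z ∈ d.support, d z • (((z.1 : Rᵐᵒᵖ).unop) • z.2)
          = A d := by
            rw [Finsupp.liftAddHom_apply, Finsupp.sum]
            rfl
        _ = 0 := hd
    have key := star hM I g (fun j => (σ j).1.1) (fun j => d (σ j).1 • (σ j).1.2) hrel
    have hq : q d = ∑ j, g ((σ j).1.1) (d (σ j).1 • (σ j).1.2) := by
      have h3 : ∀ j : Fin k, g ((σ j).1.1) (d (σ j).1 • (σ j).1.2)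
          = d (σ j).1 • g ((σ j).1.1) ((σ j).1.2) := fun j => map_zsmul _ _ _
      rw [Finset.sum_congr rfl fun j _ => h3 j]
      have h4 : ∑ j, d (σ j).1 • g ((σ j).1.1) ((σ j).1.2)
          = ∑ z : d.support, d z.1 • g (z.1.1) (z.1.2) :=
        Fintype.sum_equiv σ _ _ (fun j => rfl)
      rw [h4, Finset.sum_coe_sort d.support (fun z => d z • g (z.1) (z.2))]
      rw [Finsupp.liftAddHom_apply, Finsupp.sum]
      rfl
    rw [hq]
    exact key
  obtain ⟨W, hW⟩ := addHom_factor A q hker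
  let c : CharMod M := W
  refine ⟨{ toFun := fun ρ => ρ • c
            map_add' := fun ρ ρ' => add_smul ρ ρ' _
            map_smul' := fun ρ ρ' => mul_smul ρ ρ' _ }, ?_⟩
  intro x hx
  ext m
  show (x • c) m = g ⟨x, hx⟩ m
  rw [smul_right_apply]
  have h5 : (x.unop • m) = A (Finsupp.single (⟨⟨x, hx⟩, m⟩ : I × M) 1) := by
    rw [Finsupp.liftAddHom_apply_single]
    show x.unop • m = (1 : ℤ) • (x.unop • m)
    rw [one_smul]
  show W (x.unop • m) = g ⟨x, hx⟩ m
  rw [h5, hW]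
  rw [Finsupp.liftAddHom_apply_single]
  show (1 : ℤ) • (g ⟨x, hx⟩ m) = g ⟨x, hx⟩ m
  rw [one_smul]

lemma flatRel_of_retract {M F : Type} [AddCommGroup M] [Module R M] [AddCommGroup F]
    [Module R F] (s : M →ₗ[R] F) (ρ : F →ₗ[R] M) (hs : ∀ m, ρ (s m) = m)
    (hF : FlatRel R F) : FlatRel R M := by
  intro k x m hrel
  have hrel' : ∑ j, x j • s (m j) = 0 := by
    have : ∑ j, x j • s (m j) = s (∑ j, x j • m j) := by
      rw [map_sum]
      exact Finset.sum_congr rfl fun j _ => (map_smul s (x j) (m j)).symm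
    rw [this, hrel, map_zero]
  obtain ⟨t, v, w, hv, hw⟩ := hF k x (fun j => s (m j)) hrel'
  refine ⟨t, v, fun u => ρ (w u), hv, fun j => ?_⟩
  have := congrArg ρ (hw j)
  rw [hs] at this
  rw [this, map_sum]
  exact Finset.sum_congr rfl fun u _ => map_smul ρ _ _

lemma flatRel_free (ι : Type) : FlatRel R (ι →₀ R) := by
  classical
  intro k x f hrel
  let B : Finset ι := Finset.univ.biUnion fun j => (f j).support
  let σ : Fin (Fintype.card B) ≃ B := (Fintype.equivFin _).symm
  refine ⟨Fintype.card B, fun t j => f j ((σ t) : ι),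
    fun t => Finsupp.single ((σ t) : ι) 1, ?_, ?_⟩
  · intro t
    have h0 := DFunLike.congr_fun hrel ((σ t) : ι)
    rw [Finsupp.finset_sum_apply] at h0
    simpa [Finsupp.smul_apply, smul_eq_mul] using h0
  · intro j
    have h1 : ∀ t, f j ((σ t) : ι) • Finsupp.single ((σ t) : ι) (1 : R)
        = Finsupp.single ((σ t) : ι) (f j ((σ t) : ι)) := by
      intro t
      rw [Finsupp.smul_single, smul_eq_mul, mul_one]
    rw [Finset.sum_congr rfl fun t _ => h1 t]
    have h2 : ∑ t, Finsupp.single ((σ t) : ι) (f j ((σ t) : ι))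
        = ∑ b : B, Finsupp.single (b : ι) (f j b) :=
      Fintype.sum_equiv σ _ _ (fun t => rfl)
    rw [h2, Finset.sum_coe_sort B (fun b => Finsupp.single b (f j b))]
    have h3 : (f j).support ⊆ B := fun b hb =>
      Finset.mem_biUnion.mpr ⟨j, Finset.mem_univ j, hb⟩
    rw [← Finset.sum_subset h3 (fun b _ hb => by
      rw [Finsupp.notMem_support_iff.mp hb, Finsupp.single_zero])]
    exact (Finsupp.sum_single (f j)).symm

lemma flatRel_of_projective {M : Type} [AddCommGroup M] [Module R M]
    (h : Module.Projective R M) : FlatRel R M := by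
  obtain ⟨s, hs⟩ := Module.projective_def.mp h
  exact flatRel_of_retract s (Finsupp.linearCombination R id) hs (flatRel_free M)

/-- Over a right coherent ring, the character module of an injective right module
satisfies the equational flatness criterion (Cheatham–Stone). -/
lemma flatRel_charMod_of_injective (hcoh : RightCoherent R) (E : Type) [AddCommGroup E]
    [Module Rᵐᵒᵖ E] (hE : Module.Injective Rᵐᵒᵖ E) : FlatRel R (CharMod E) := by
  classical
  intro k x m hrel
  have hrel' : ∀ e : E, ∑ j, m j (op (x j) • e) = 0 := by
    intro e
    have h0 : evalCM e (∑ j, x j • m j) = 0 := by rw [hrel]; rfl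
    rw [map_sum (evalCM e)] at h0
    exact h0
  set I₀ : Submodule Rᵐᵒᵖ R := Submodule.span Rᵐᵒᵖ (Set.range x) with hI₀
  have hfg : I₀.FG := ⟨Finset.univ.image x, by
    rw [Finset.coe_image, Finset.coe_univ, Set.image_univ]⟩
  have hfp : Module.FinitePresentation Rᵐᵒᵖ I₀ := hcoh I₀ hfg
  let xI : Fin k → I₀ := fun j => ⟨x j, Submodule.subset_span (Set.mem_range_self j)⟩
  let π : (Fin k → Rᵐᵒᵖ) →ₗ[Rᵐᵒᵖ] I₀ :=
    { toFun := fun a => ∑ j, a j • xI j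
      map_add' := fun a b => by
        simp only [Pi.add_apply, add_smul]
        rw [Finset.sum_add_distrib]
      map_smul' := fun r a => by
        simp only [Pi.smul_apply, smul_eq_mul, RingHom.id_apply, mul_smul]
        rw [Finset.smul_sum] }
  have hπval : ∀ a, ((π a : I₀) : R) = ∑ j, a j • x j := by
    intro a
    show ((∑ j, a j • xI j : I₀) : R) = _
    push_cast
    rfl
  have hπ : Function.Surjective π := by
    rintro ⟨y, hy⟩
    have hex : ∃ a : Fin k → Rᵐᵒᵖ, ∑ j, a j • x j = y := by
      refine Submodule.span_induction ?_ ?_ ?_ ?_ hy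
      · rintro _ ⟨j, rfl⟩
        refine ⟨(Pi.single j 1 : Fin k → Rᵐᵒᵖ), ?_⟩
        rw [Finset.sum_eq_single j (fun i _ hij => by
          rw [Pi.single_eq_of_ne hij, zero_smul]) (by simp)]
        rw [Pi.single_eq_same, one_smul]
      · exact ⟨0, by simp⟩
      · rintro y z - - ⟨a, ha⟩ ⟨b, hb⟩
        refine ⟨a + b, ?_⟩
        simp only [Pi.add_apply, add_smul]
        rw [Finset.sum_add_distrib, ha, hb]
      · rintro r y - ⟨a, ha⟩
        refine ⟨r • a, ?_⟩
        simp only [Pi.smul_apply, smul_eq_mul, mul_smul]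
        rw [← Finset.smul_sum, ha]
    obtain ⟨a, ha⟩ := hex
    exact ⟨a, Subtype.ext (by rw [hπval a, ha])⟩
  have hker : (LinearMap.ker π).FG := by
    haveI := hfp
    exact Module.FinitePresentation.fg_ker π hπ
  obtain ⟨V, hV⟩ := hker
  set s := Fintype.card V with hs
  let σ : Fin s ≃ V := (Fintype.equivFin _).symm
  let v : Fin s → Fin k → Rᵐᵒᵖ := fun t => ((σ t) : Fin k → Rᵐᵒᵖ)
  have hvker : ∀ t, v t ∈ LinearMap.ker π := fun t => by
    rw [← hV]; exact Submodule.subset_span (σ t).2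
  let A : (Fin k → E) →+ (Fin s → E) :=
    AddMonoidHom.mk' (fun e t => ∑ j, v t j • e j) (fun e e' => by
      funext t
      show ∑ j, v t j • (e j + e' j) = _
      simp only [smul_add]
      rw [Finset.sum_add_distrib]
      rfl)
  let μ : (Fin k → E) →+ AddCircle (1 : ℚ) :=
    AddMonoidHom.mk' (fun e => ∑ j, m j (e j)) (fun e e' => by
      show ∑ j, m j (e j + e' j) = _
      simp only [map_add]
      rw [Finset.sum_add_distrib])
  have hkerA : ∀ e, A e = 0 → μ e = 0 := by
    intro e he
    have he' : ∀ t, ∑ j, v t j • e j = 0 := fun t => congrFun he t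
    let q0 : (Fin k → Rᵐᵒᵖ) →ₗ[Rᵐᵒᵖ] E :=
      { toFun := fun a => ∑ j, a j • e j
        map_add' := fun a b => by
          simp only [Pi.add_apply, add_smul]
          rw [Finset.sum_add_distrib]
        map_smul' := fun r a => by
          simp only [Pi.smul_apply, smul_eq_mul, RingHom.id_apply, mul_smul]
          rw [Finset.smul_sum] }
    have hle : LinearMap.ker π ≤ LinearMap.ker q0 := by
      rw [← hV, Submodule.span_le]
      intro u hu
      have hu' : u ∈ V := hu
      have h5 : v (σ.symm ⟨u, hu'⟩) = u := by
        show ((σ (σ.symm ⟨u, hu'⟩)) : Fin k → Rᵐᵒᵖ) = u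
        rw [Equiv.apply_symm_apply]
      have h6 := he' (σ.symm ⟨u, hu'⟩)
      rw [h5] at h6
      exact LinearMap.mem_ker.mpr h6
    have key2 : ∀ a b, π a = π b → q0 a = q0 b := by
      intro a b hab
      have hmem : a - b ∈ LinearMap.ker π := by
        rw [LinearMap.mem_ker, map_sub, hab, sub_self]
      have h7 := hle hmem
      rw [LinearMap.mem_ker, map_sub, sub_eq_zero] at h7
      exact h7
    let f : I₀ →ₗ[Rᵐᵒᵖ] E :=
      { toFun := fun y => q0 (Function.surjInv hπ y)
        map_add' := fun y z => by
          rw [← map_add q0]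
          exact key2 _ _ (by
            rw [map_add, Function.surjInv_eq hπ, Function.surjInv_eq hπ,
              Function.surjInv_eq hπ])
        map_smul' := fun r y => by
          simp only [RingHom.id_apply]
          rw [← map_smul q0]
          exact key2 _ _ (by
            rw [map_smul, Function.surjInv_eq hπ, Function.surjInv_eq hπ]) }
    have hfπ : ∀ a, f (π a) = q0 a := fun a => key2 _ _ (Function.surjInv_eq hπ _)
    obtain ⟨F, hF⟩ := hE.out I₀.subtype (Submodule.injective_subtype I₀) f
    have he0 : ∀ j, e j = op (x j) • F 1 := by
      intro j
      have h6 : q0 (Pi.single j 1 : Fin k → Rᵐᵒᵖ) = e j := by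
        show ∑ i, (Pi.single j 1 : Fin k → Rᵐᵒᵖ) i • e i = e j
        rw [Finset.sum_eq_single j (fun i _ hij => by
          rw [Pi.single_eq_of_ne hij, zero_smul]) (by simp)]
        rw [Pi.single_eq_same, one_smul]
      have h7 : π (Pi.single j 1 : Fin k → Rᵐᵒᵖ) = xI j := by
        apply Subtype.ext
        rw [hπval]
        show ∑ i, (Pi.single j 1 : Fin k → Rᵐᵒᵖ) i • x i = x j
        rw [Finset.sum_eq_single j (fun i _ hij => by
          rw [Pi.single_eq_of_ne hij, zero_smul]) (by simp)]
        rw [Pi.single_eq_same, one_smul]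
      have h8 : x j = op (x j) • (1 : R) := by
        rw [MulOpposite.smul_eq_mul_unop, unop_op, one_mul]
      calc e j = q0 (Pi.single j 1 : Fin k → Rᵐᵒᵖ) := h6.symm
        _ = f (π (Pi.single j 1 : Fin k → Rᵐᵒᵖ)) := (hfπ _).symm
        _ = f (xI j) := by rw [h7]
        _ = F (I₀.subtype (xI j)) := (hF (xI j)).symm
        _ = F (op (x j) • (1 : R)) := by
            show F (x j) = _
            rw [← h8]
        _ = op (x j) • F 1 := map_smul F _ _
    have h9 : μ e = ∑ j, m j (op (x j) • F 1) := by
      show ∑ j, m j (e j) = _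
      exact Finset.sum_congr rfl fun j _ => by rw [he0 j]
    rw [h9]
    exact hrel' (F 1)
  obtain ⟨W, hW⟩ := addHom_factor A μ hkerA
  let w : Fin s → CharMod E := fun t =>
    AddMonoidHom.mk' (fun e => W (Pi.single t e)) (fun e e' => by
      show W (Pi.single t (e + e')) = W (Pi.single t e) + W (Pi.single t e')
      rw [← map_add, ← Pi.single_add])
  refine ⟨s, fun t j => (v t j).unop, w, ?_, ?_⟩
  · intro t
    have h10 := LinearMap.mem_ker.mp (hvker t)
    have h9 : (∑ j, v t j • x j) = 0 := by
      rw [← hπval (v t), h10]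
      simp
    calc ∑ j, x j * (v t j).unop = ∑ j, (v t j) • x j := by
          refine Finset.sum_congr rfl fun j _ => ?_
          rw [MulOpposite.smul_eq_mul_unop]
      _ = 0 := h9
  · intro j
    ext e
    have h10 : A (Pi.single j e : Fin k → E) = fun t => v t j • e := by
      funext t
      show ∑ i, v t i • (Pi.single j e : Fin k → E) i = v t j • e
      rw [Finset.sum_eq_single j (fun i _ hij => by
        rw [Pi.single_eq_of_ne hij, smul_zero]) (by simp)]
      rw [Pi.single_eq_same]
    have h11 : μ (Pi.single j e : Fin k → E) = m j e := by
      show ∑ i, m i ((Pi.single j e : Fin k → E) i) = m j e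
      rw [Finset.sum_eq_single j (fun i _ hij => by
        rw [Pi.single_eq_of_ne hij, map_zero]) (by simp)]
      rw [Pi.single_eq_same]
    have h12 := hW (Pi.single j e : Fin k → E)
    rw [h10, h11] at h12
    show m j e = evalCM e (∑ t, (v t j).unop • w t)
    rw [map_sum (evalCM e)]
    have h13 : ∀ t, evalCM e ((v t j).unop • w t)
        = W (Pi.single t (v t j • e) : Fin s → E) := by
      intro t
      show ((v t j).unop • w t) e = _
      rw [smul_left_apply, op_unop]
      rfl
    rw [Finset.sum_congr rfl fun t _ => h13 t, ← map_sum W]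
    have h14 : (∑ t, (Pi.single t (v t j • e) : Fin s → E)) = fun t => v t j • e :=
      Finset.univ_sum_single _
    rw [h14]
    exact h12.symm

/-- `Hom(C, -)` is exact on modules of finite projective dimension, for a totally acyclic
complex of projectives. -/
lemma homExact_of_projDimLE (C : Cx R) (hX : ∀ n, Module.Projective R (C.X n))
    (hex : C.Exact) (hhom : ∀ P : ModuleCat R, Module.Projective R P → C.HomExact P) :
    ∀ (m : ℕ) (Q : ModuleCat R), projDimLE R m Q → C.HomExact Q := by
  intro m
  induction m with
  | zero => exact fun Q hQ => hhom Q hQ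
  | succ m ih =>
    intro Q hQ n f hf
    obtain ⟨K, P, i, p, hP, hi, hp, hiexact, hK⟩ := hQ
    haveI := hX (n + 1)
    obtain ⟨f', hf'⟩ := Module.projective_lifting_property p.hom
      f.hom hp
    have hmem : ∀ z, f' (C.d (n + 1) z) ∈ Set.range i.hom := by
      intro z
      have h1 : p (f' (C.d (n + 1) z)) = 0 := by
        have h2 : p (f' (C.d (n + 1) z)) = f (C.d (n + 1) z) := DFunLike.congr_fun hf' _
        rw [h2]
        exact LinearMap.congr_fun (congrArg ModuleCat.Hom.hom hf) z
      exact (hiexact _).mp h1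
    have hmem' : ∀ z, ((f' : C.X (n + 1) →ₗ[R] P) ∘ₗ (C.d (n + 1)).hom) z ∈
        LinearMap.range i.hom := by
      intro z
      rw [LinearMap.mem_range]
      obtain ⟨u, hu⟩ := hmem z
      exact ⟨u, hu⟩
    let e : K ≃ₗ[R] LinearMap.range i.hom :=
      LinearEquiv.ofInjective i.hom hi
    have hih : ∀ u : LinearMap.range i.hom,
        i.hom (e.symm u) = (u : P) := by
      intro u
      calc i.hom (e.symm u) = ((e (e.symm u)) : P) :=
            (LinearEquiv.ofInjective_apply i.hom (e.symm u)).symm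
        _ = (u : P) := by rw [e.apply_symm_apply]
    let h : C.X (n + 1 + 1) ⟶ K := ModuleCat.ofHom <|
      (e.symm.toLinearMap) ∘ₗ (LinearMap.codRestrict _
        ((f' : C.X (n + 1) →ₗ[R] P) ∘ₗ (C.d (n + 1)).hom) hmem')
    have hcomp : ∀ z, i.hom (h z) = f' (C.d (n + 1) z) := fun z => hih _
    have hd0 : C.d (n + 1 + 1) ≫ h = 0 := by
      ext z
      have hz0 : h (C.d (n + 1 + 1) z) = 0 := by
        apply hi
        rw [hcomp, (hex (n + 1)).apply_apply_eq_zero z, map_zero, map_zero]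
      exact hz0
    obtain ⟨kk, hkk⟩ := ih K hK (n + 1) h hd0
    let f'' : C.X (n + 1) ⟶ P := ModuleCat.ofHom f' - (kk ≫ i)
    have hd1 : C.d (n + 1) ≫ f'' = 0 := by
      ext z
      have h3 : kk (C.d (n + 1) z) = h z := LinearMap.congr_fun (congrArg ModuleCat.Hom.hom hkk) z
      have h6 : f'' (C.d (n + 1) z)
          = f' (C.d (n + 1) z) - i (kk (C.d (n + 1) z)) := rfl
      show f'' (C.d (n + 1) z) = 0
      rw [h6, h3, hcomp z, sub_self]
    obtain ⟨g', hg'⟩ := hhom P hP n f'' hd1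
    refine ⟨g' ≫ p, ?_⟩
    ext z
    show p (g' (C.d n z)) = f z
    have h4 : g' (C.d n z) = f'' z := LinearMap.congr_fun (congrArg ModuleCat.Hom.hom hg') z
    rw [h4]
    show p (f' z - i (kk z)) = f z
    rw [map_sub]
    have h5 : p (i (kk z)) = 0 := hiexact.apply_apply_eq_zero (kk z)
    rw [h5, sub_zero]
    exact DFunLike.congr_fun hf' z

end GorensteinAux

/-- over a right coherent left `n`-perfect ring, every Gorenstein projective
module is Gorenstein flat. -/
theorem gorensteinProjective_gorensteinFlat (R : Type) [Ring R] (n : ℕ)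
    (hcoh : RightCoherent R) (hperf : LeftNPerfect R n)
    (M : Type) [AddCommGroup M] [Module R M] (hM : IsGorensteinProjective R M) :
    IsGorensteinFlat R M := by
  obtain ⟨C, hproj, hex, hhom, ⟨iso⟩⟩ := hM
  refine ⟨C, ?_, hex, ?_, ⟨iso⟩⟩
  · intro nn
    exact GorensteinAux.flatRel_isFlatMod (GorensteinAux.flatRel_of_projective (hproj nn))
  · intro E _ _ hE
    have hflat : IsFlatMod R (CharMod E) :=
      GorensteinAux.flatRel_isFlatMod (GorensteinAux.flatRel_charMod_of_injective hcoh E hE)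
    have hpd := hperf (ModuleCat.of R (CharMod E)) hflat
    exact GorensteinAux.homExact_of_projDimLE C hproj hex hhom n
      (ModuleCat.of R (CharMod E)) hpd

end
end
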